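/- Let X be a simply-laced Dynkin diagram, Y an affine subdiagram with null root δ_Y, and β a real root of X with (δ_Y, β) = −1. Then there exists σ in the parabolic subgroup W(Y ⊔ Y⊥) of W(X) such that σβ is a simple root of X. -/
import Mathlib


set_option synthInstance.maxHeartbeats 1000000
set_option maxHeartbeats 1000000

/-- A generalized Cartan matrix (GCM). -/
def IsGCM {ι : Type*} (A : Matrix ι ι ℤ) : Prop :=
  (∀ i, A i i = 2) ∧ (∀ i j, i ≠ j → A i j ≤ 0) ∧ (∀ i j, A i j = 0 → A j i = 0)

/-- An indecomposable matrix (connected Dynkin diagram). -/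
def IsIndecomposable {ι : Type*} (A : Matrix ι ι ℤ) : Prop :=
  ∀ s : Set ι, s.Nonempty → sᶜ.Nonempty → ∃ i ∈ s, ∃ j ∈ sᶜ, A i j ≠ 0

/-- An abstract model of the root-lattice data of a symmetrizable Kac-Moody algebra `g(A)`:
the root lattice is realized inside `ι → ℚ`, simple roots being the coordinate vectors;
together with the root system, real/imaginary roots, invariant symmetric bilinear form,
coroot pairing `⟨β∨, γ⟩`, root strings and simple reflections. -/
structure KacMoodyRootSystem (ι : Type) [Fintype ι] [DecidableEq ι] where
  A : Matrix ι ι ℤ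
  isGCM : IsGCM A
  d : ι → ℚ
  d_pos : ∀ i, 0 < d i
  d_symm : ∀ i j, d i * A i j = d j * A j i
  roots : Set (ι → ℚ)
  realRoots : Set (ι → ℚ)
  imRoots : Set (ι → ℚ)
  real_sub : realRoots ⊆ roots
  im_sub : imRoots ⊆ roots
  roots_eq_union : roots = realRoots ∪ imRoots
  zero_not_root : (0 : ι → ℚ) ∉ roots
  neg_root : ∀ α ∈ roots, -α ∈ roots
  neg_real : ∀ α ∈ realRoots, -α ∈ realRoots
  simple_real : ∀ i, Pi.single i 1 ∈ realRoots
  root_int : ∀ α ∈ roots, ∀ i, ∃ k : ℤ, α i = (k : ℚ)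
  root_sign : ∀ α ∈ roots, (∀ i, 0 ≤ α i) ∨ (∀ i, α i ≤ 0)
  root_connected : ∀ α ∈ roots, ∀ s : Set ι,
      (∃ i ∈ s, α i ≠ 0) → (∃ j ∉ s, α j ≠ 0) →
      ∃ i ∈ s, ∃ j ∉ s, α i ≠ 0 ∧ α j ≠ 0 ∧ A i j ≠ 0
  form : (ι → ℚ) →ₗ[ℚ] (ι → ℚ) →ₗ[ℚ] ℚ
  form_symm : ∀ x y, form x y = form y x
  form_simple : ∀ i j, form (Pi.single i 1) (Pi.single j 1) = d i * A i j
  real_norm_pos : ∀ α ∈ realRoots, 0 < form α α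
  im_norm_nonpos : ∀ α ∈ imRoots, form α α ≤ 0
  root_norm_criterion : ∀ α ∈ roots, 0 < form α α → α ∈ realRoots
  pairing : (ι → ℚ) → (ι → ℚ) → ℤ
  pairing_eq : ∀ α ∈ realRoots, ∀ x, form α α * (pairing α x : ℚ) = 2 * form α x
  rootString : ∀ β ∈ realRoots, ∀ γ ∈ roots, γ ≠ β → γ ≠ -β →
      ∃ p q : ℕ, ((p : ℤ) - (q : ℤ) = pairing β γ ∧
        ∀ k : ℤ, γ + (k : ℚ) • β ∈ roots ↔ -(p : ℤ) ≤ k ∧ k ≤ (q : ℤ))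
  reflection : ι → ((ι → ℚ) ≃ₗ[ℚ] (ι → ℚ))
  reflection_apply : ∀ i x,
      reflection i x = x - (pairing (Pi.single i 1) x : ℚ) • (Pi.single i 1 : ι → ℚ)
  reflection_root : ∀ i, ∀ α ∈ roots, reflection i α ∈ roots
  reflection_real : ∀ i, ∀ α ∈ realRoots, reflection i α ∈ realRoots
  reflection_im : ∀ i, ∀ α ∈ imRoots, reflection i α ∈ imRoots
  reflection_form : ∀ i x y, form (reflection i x) (reflection i y) = form x y
  reflection_pos : ∀ i, ∀ α ∈ realRoots, (∀ j, 0 ≤ α j) → α ≠ Pi.single i 1 →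
      ∀ j, 0 ≤ reflection i α j

namespace KacMoodyRootSystem

variable {ι : Type} [Fintype ι] [DecidableEq ι]

/-- The Weyl group `W(A)`, generated by the simple reflections. -/
def Weyl (K : KacMoodyRootSystem ι) : Subgroup ((ι → ℚ) ≃ₗ[ℚ] (ι → ℚ)) :=
  Subgroup.closure (Set.range K.reflection)

/-- The standard parabolic subgroup `W(S)` generated by the simple reflections at `S`. -/
def ParabolicWeyl (K : KacMoodyRootSystem ι) (S : Set ι) :
    Subgroup ((ι → ℚ) ≃ₗ[ℚ] (ι → ℚ)) :=
  Subgroup.closure (K.reflection '' S)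

/-- `Y⊥`: vertices neither in `Y` nor adjacent to `Y`. -/
def Perp (K : KacMoodyRootSystem ι) (Y : Set ι) : Set ι :=
  {p | p ∉ Y ∧ ∀ q ∈ Y, K.A p q = 0}

/-- A π-system: a family of distinct real roots whose pairwise differences are not roots. -/
def IsPiSys (K : KacMoodyRootSystem ι) {κ : Type} (β : κ → (ι → ℚ)) : Prop :=
  Function.Injective β ∧ (∀ i, β i ∈ K.realRoots) ∧
    ∀ i j, i ≠ j → β i - β j ∉ K.roots

/-- A π-system of type `B`: a π-system whose matrix `M(Σ) = (⟨βᵢ∨, βⱼ⟩)` equals `B`. -/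
def IsPiSysOfType (K : KacMoodyRootSystem ι) {κ : Type} (β : κ → (ι → ℚ))
    (B : Matrix κ κ ℤ) : Prop :=
  K.IsPiSys β ∧ ∀ i j, K.pairing (β i) (β j) = B i j

/-- `δ` is the null root of an affine-type subdiagram `Y`: it is a positive imaginary
isotropic root supported exactly on `Y`, orthogonal to all simple roots of `Y`. -/
def IsAffineNullRoot (K : KacMoodyRootSystem ι) (Y : Set ι) (δ : ι → ℚ) : Prop :=
  (∀ q, δ q ≠ 0 ↔ q ∈ Y) ∧ (∀ q, 0 ≤ δ q) ∧ (∀ q, ∃ k : ℤ, δ q = (k : ℚ)) ∧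
    δ ∈ K.imRoots ∧ (∀ q ∈ Y, K.form δ (Pi.single q 1) = 0) ∧ K.form δ δ = 0

end KacMoodyRootSystem

namespace KMAux
open KacMoodyRootSystem
variable {ι : Type} [Fintype ι] [DecidableEq ι] (K : KacMoodyRootSystem ι)

lemma single_eq_smul (x : ι → ℚ) (i : ι) :
    Pi.single i (x i) = x i • (Pi.single i 1 : ι → ℚ) := by
  ext j
  by_cases h : j = i
  · subst h; simp
  · simp [Pi.single_apply, h, Ne.symm h]

lemma form_expand_left (x y : ι → ℚ) :
    K.form x y = ∑ i, x i * K.form (Pi.single i 1) y := by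
  conv_lhs => rw [← Finset.univ_sum_single x]
  rw [map_sum]
  simp only [LinearMap.sum_apply]
  refine Finset.sum_congr rfl fun i _ => ?_
  rw [single_eq_smul x i, map_smul]
  simp

lemma form_expand_right (x y : ι → ℚ) :
    K.form x y = ∑ j, y j * K.form x (Pi.single j 1) := by
  conv_lhs => rw [← Finset.univ_sum_single y]
  rw [map_sum]
  refine Finset.sum_congr rfl fun j _ => ?_
  rw [single_eq_smul y j, map_smul]
  simp

lemma form_single_single (i j : ι) (hsl : ∀ i, K.d i = 1) :
    K.form (Pi.single i 1) (Pi.single j 1) = (K.A i j : ℚ) := by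
  rw [K.form_simple, hsl, one_mul]

lemma A_symm (hsl : ∀ i, K.d i = 1) (i j : ι) : K.A i j = K.A j i := by
  have := K.d_symm i j
  rw [hsl, hsl, one_mul, one_mul] at this
  exact_mod_cast this

lemma pairing_simple (hsl : ∀ i, K.d i = 1) (i : ι) (x : ι → ℚ) :
    (K.pairing (Pi.single i 1) x : ℚ) = K.form (Pi.single i 1) x := by
  have h2 : K.form (Pi.single i 1) (Pi.single i 1) = 2 := by
    rw [form_single_single K i i hsl, K.isGCM.1 i]; norm_num
  have := K.pairing_eq (Pi.single i 1) (K.simple_real i) x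
  rw [h2] at this
  linarith

end KMAux

set_option linter.unusedSectionVars false
namespace KMAux
variable {ι : Type} [Fintype ι] [DecidableEq ι] (K : KacMoodyRootSystem ι)

lemma form_int_expand (hsl : ∀ i, K.d i = 1) (x y : ι → ℚ) :
    K.form x y = ∑ i, ∑ j, x i * y j * (K.A i j : ℚ) := by
  rw [form_expand_left]
  refine Finset.sum_congr rfl fun i _ => ?_
  rw [form_expand_right, Finset.mul_sum]
  refine Finset.sum_congr rfl fun j _ => ?_
  rw [form_single_single K i j hsl]
  ring

lemma norm_even (hsl : ∀ i, K.d i = 1) (β : ι → ℚ) (hint : ∀ i, ∃ k : ℤ, β i = (k : ℚ)) :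
    ∃ m : ℤ, K.form β β = 2 * (m : ℚ) := by
  choose k hk using hint
  set N : ℤ := ∑ i, ∑ j, k i * k j * K.A i j with hN
  have hform : K.form β β = (N : ℚ) := by
    rw [form_int_expand K hsl, hN]
    push_cast
    simp only [hk]
  have hdvd : (2 : ℤ) ∣ N := by
    have key : ∑ a ∈ (Finset.univ ×ˢ Finset.univ : Finset (ι × ι)),
        ((k a.1 : ZMod 2) * (k a.2 : ZMod 2) * (K.A a.1 a.2 : ZMod 2)) = 0 := by
      have h1 : ∀ a : ι × ι,
          ((k a.1 : ZMod 2) * (k a.2 : ZMod 2) * (K.A a.1 a.2 : ZMod 2))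
          + ((k a.swap.1 : ZMod 2) * (k a.swap.2 : ZMod 2) * (K.A a.swap.1 a.swap.2 : ZMod 2))
          = 0 := by
        intro a
        have hsym : ((k a.swap.1 : ZMod 2) * (k a.swap.2 : ZMod 2)
              * (K.A a.swap.1 a.swap.2 : ZMod 2))
            = ((k a.1 : ZMod 2) * (k a.2 : ZMod 2) * (K.A a.1 a.2 : ZMod 2)) := by
          simp only [Prod.fst_swap, Prod.snd_swap]
          rw [A_symm K hsl a.2 a.1]; ring
        rw [hsym]
        exact CharTwo.add_self_eq_zero _
      have h2 : ∀ a : ι × ι,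
          ((k a.1 : ZMod 2) * (k a.2 : ZMod 2) * (K.A a.1 a.2 : ZMod 2)) ≠ 0
          → Prod.swap a ≠ a := by
        intro a ha hswap
        apply ha
        have h12 : a.2 = a.1 := congrArg Prod.fst hswap
        rw [h12, K.isGCM.1 a.1]
        have h2' : ((2:ℤ) : ZMod 2) = 0 := rfl
        rw [h2', mul_zero]
      exact Finset.sum_ninvolution
        (f := fun a : ι × ι => ((k a.1 : ZMod 2) * (k a.2 : ZMod 2) * (K.A a.1 a.2 : ZMod 2)))
        Prod.swap h1 h2 (fun a => Finset.mem_univ _) (fun a => Prod.swap_swap a)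
    have hcast : ((N : ZMod 2)) = 0 := by
      rw [hN]
      push_cast
      rw [← key, Finset.sum_product]
    exact (ZMod.intCast_zmod_eq_zero_iff_dvd N 2).mp hcast
  obtain ⟨m, hm⟩ := hdvd
  exact ⟨m, by rw [hform, hm]; push_cast; ring⟩

lemma real_norm_ge_two (hsl : ∀ i, K.d i = 1) (β : ι → ℚ) (hβ : β ∈ K.realRoots) :
    2 ≤ K.form β β := by
  obtain ⟨m, hm⟩ := norm_even K hsl β (K.root_int β (K.real_sub hβ))
  have hpos := K.real_norm_pos β hβ
  rw [hm] at hpos ⊢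
  have h0 : (0:ℚ) < m := by linarith
  have h1 : (1:ℚ) ≤ m := by exact_mod_cast (by exact_mod_cast h0 : (0:ℤ) < m)
  linarith
end KMAux

namespace KMAux
variable {ι : Type} [Fintype ι] [DecidableEq ι] (K : KacMoodyRootSystem ι)

lemma descent (hsl : ∀ i, K.d i = 1) (S : Set ι) (p : ι) (hp : p ∉ S) :
    ∀ n : ℕ, ∀ β : ι → ℚ, β ∈ K.realRoots → β p = 1 →
    (∀ q, q ≠ p → q ∉ S → β q = 0) → (∀ q, 0 ≤ β q) →
    (∑ q, β q) ≤ (n : ℚ) →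
    ∃ σ ∈ K.ParabolicWeyl S, σ β = (Pi.single p 1 : ι → ℚ) := by
  intro n
  induction n with
  | zero =>
      intro β hβ hβp hsupp hpos hsum
      exfalso
      have h1 : (1:ℚ) ≤ ∑ q, β q := by
        calc (1:ℚ) = β p := hβp.symm
        _ ≤ ∑ q, β q := Finset.single_le_sum (fun q _ => hpos q) (Finset.mem_univ p)
      norm_num at hsum
      linarith
  | succ n ih =>
      intro β hβ hβp hsupp hpos hsum
      by_cases hz : ∀ q ∈ S, β q = 0
      · refine ⟨1, Subgroup.one_mem _, ?_⟩
        have : β = Pi.single p 1 := by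
          funext r
          by_cases hr : r = p
          · subst hr; simp [hβp]
          · rw [Pi.single_apply, if_neg (by exact fun h => hr h)]
            by_cases hrS : r ∈ S
            · exact hz r hrS
            · exact hsupp r hr hrS
        rw [this]; rfl
      · push_neg at hz
        obtain ⟨q₀, hq₀S, hq₀⟩ := hz
        have hq₀p : q₀ ≠ p := fun h => hp (h ▸ hq₀S)
        have hq₀pos : 0 < β q₀ := lt_of_le_of_ne (hpos q₀) (Ne.symm hq₀)
        -- the key claim
        have hkey : ∃ q ∈ S, 0 < β q ∧ 1 ≤ K.form (Pi.single q 1) β := by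
          by_contra hcon
          push_neg at hcon
          have hle0 : ∀ q ∈ S, 0 < β q → K.form (Pi.single q 1) β ≤ 0 := by
            intro q hqS hq
            have h1 := hcon q hqS hq
            have hint : (K.pairing (Pi.single q 1) β : ℚ) = K.form (Pi.single q 1) β :=
              pairing_simple K hsl q β
            rw [← hint] at h1 ⊢
            have h2 : K.pairing (Pi.single q 1) β < 1 := by exact_mod_cast h1
            have h3 : K.pairing (Pi.single q 1) β ≤ 0 := by omega
            exact_mod_cast h3
          have hsum2 : K.form β β = ∑ i, β i * K.form (Pi.single i 1) β :=
            form_expand_left K β β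
          have hterm : ∀ i ∈ Finset.univ.erase p, β i * K.form (Pi.single i 1) β ≤ 0 := by
            intro i hi
            have hip : i ≠ p := (Finset.mem_erase.mp hi).1
            by_cases hiS : i ∈ S
            · rcases eq_or_lt_of_le (hpos i) with h | h
              · rw [← h, zero_mul]
              · exact mul_nonpos_of_nonneg_of_nonpos (hpos i) (hle0 i hiS h)
            · rw [hsupp i hip hiS, zero_mul]
          have hfp : 2 ≤ K.form (Pi.single p 1) β := by
            have h2 := real_norm_ge_two K hsl β hβ
            have hsplit : K.form β β
                = β p * K.form (Pi.single p 1) β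
                  + ∑ i ∈ Finset.univ.erase p, β i * K.form (Pi.single i 1) β := by
              rw [hsum2, ← Finset.add_sum_erase _ _ (Finset.mem_univ p)]
            have hneg : ∑ i ∈ Finset.univ.erase p, β i * K.form (Pi.single i 1) β ≤ 0 :=
              Finset.sum_nonpos hterm
            rw [hβp, one_mul] at hsplit
            linarith
          -- root string through β in direction α_p
          have hne1 : β ≠ Pi.single p 1 := by
            intro h
            rw [h] at hq₀
            exact hq₀ (by rw [Pi.single_apply, if_neg (fun hh => hq₀p hh)])
          have hne2 : β ≠ -Pi.single p 1 := by
            intro h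
            have := congrFun h p
            rw [hβp] at this
            simp at this
            norm_num at this
          obtain ⟨ps, qs, hpq, hmem⟩ :=
            K.rootString (Pi.single p 1) (K.simple_real p) β (K.real_sub hβ) hne1 hne2
          have hpair : (2:ℤ) ≤ K.pairing (Pi.single p 1) β := by
            have := pairing_simple K hsl p β
            exact_mod_cast this ▸ hfp
          have hroot : β + ((-2 : ℤ) : ℚ) • (Pi.single p 1 : ι → ℚ) ∈ K.roots :=
            (hmem (-2)).mpr ⟨by omega, by omega⟩
          have hvp : (β + ((-2 : ℤ) : ℚ) • (Pi.single p 1 : ι → ℚ)) p = -1 := by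
            simp [hβp]
            norm_num
          have hvq : (β + ((-2 : ℤ) : ℚ) • (Pi.single p 1 : ι → ℚ)) q₀ = β q₀ := by
            simp [Pi.single_apply, if_neg (fun hh => hq₀p hh)]
          rcases K.root_sign _ hroot with h | h
          · have := h p; rw [hvp] at this; linarith
          · have := h q₀; rw [hvq] at this; linarith
        obtain ⟨q, hqS, hβq, hform1⟩ := hkey
        have hqp : q ≠ p := fun h => hp (h ▸ hqS)
        set m : ℤ := K.pairing (Pi.single q 1) β with hm
        have hmeq : (m : ℚ) = K.form (Pi.single q 1) β := pairing_simple K hsl q β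
        have hm1 : (1:ℤ) ≤ m := by exact_mod_cast hmeq ▸ hform1
        set β' : ι → ℚ := K.reflection q β with hβ'def
        have href : β' = β - (m : ℚ) • (Pi.single q 1 : ι → ℚ) := by
          rw [hβ'def, K.reflection_apply, hm]
        have hβ'real : β' ∈ K.realRoots := K.reflection_real q β hβ
        have hβ'p : β' p = 1 := by
          rw [href]
          simp [Pi.single_apply, Ne.symm hqp, hβp]
        have hβ'supp : ∀ r, r ≠ p → r ∉ S → β' r = 0 := by
          intro r hrp hrS
          have hrq : r ≠ q := fun h => hrS (h ▸ hqS)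
          rw [href]
          simp [Pi.single_apply, hrq, hsupp r hrp hrS]
        have hβ'pos : ∀ r, 0 ≤ β' r := by
          rcases K.root_sign β' (K.real_sub hβ'real) with h | h
          · exact h
          · exfalso; have := h p; rw [hβ'p] at this; linarith
        have hsum' : ∑ r, β' r ≤ (n : ℚ) := by
          have hcalc : ∑ r, β' r = (∑ r, β r) - (m : ℚ) := by
            rw [href]
            rw [Finset.sum_congr rfl (fun r _ => show (β - (m:ℚ) • (Pi.single q 1 : ι → ℚ)) r
              = β r - (m:ℚ) * (Pi.single q 1 : ι → ℚ) r from by simp)]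
            rw [Finset.sum_sub_distrib, ← Finset.mul_sum]
            congr 1
            rw [Finset.sum_pi_single']
            simp
          rw [hcalc]
          have : ((n:ℚ)+1) = ((n+1 : ℕ) : ℚ) := by push_cast; ring
          have hm1' : (1:ℚ) ≤ (m:ℚ) := by exact_mod_cast hm1
          push_cast at hsum
          linarith
        obtain ⟨σ', hσ'mem, hσ'eq⟩ := ih β' hβ'real hβ'p hβ'supp hβ'pos hsum'
        refine ⟨σ' * K.reflection q, ?_, ?_⟩
        · exact Subgroup.mul_mem _ hσ'mem
            (Subgroup.subset_closure (Set.mem_image_of_mem _ hqS))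
        · show σ' (K.reflection q β) = _
          rw [← hβ'def, hσ'eq]

end KMAux


/-- (Lemma on simple-root conjugacy.) If X is simply-laced, Y an affine
subdiagram with null root δ_Y, and β a real root with (δ_Y, β) = −1, then some element
σ of the parabolic subgroup W(Y ⊔ Y⊥) sends β to a simple root. -/
theorem real_root_conjugate_to_simple {ι : Type} [Fintype ι] [DecidableEq ι]
    (K : KacMoodyRootSystem ι) (hsl : ∀ i, K.d i = 1)
    (Y : Set ι) (δY : ι → ℚ) (haff : K.IsAffineNullRoot Y δY)
    (β : ι → ℚ) (hβ : β ∈ K.realRoots) (hform : K.form δY β = -1) :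
    ∃ σ ∈ K.ParabolicWeyl (Y ∪ K.Perp Y), ∃ i, σ β = (Pi.single i 1 : ι → ℚ) := by
  classical
  obtain ⟨hδsupp, hδpos, hδint, hδim, hδorth, hδiso⟩ := haff
  set S := Y ∪ K.Perp Y with hS
  set c : ι → ℚ := fun q => K.form δY (Pi.single q 1) with hc
  have hcS : ∀ q ∈ S, c q = 0 := by
    intro q hq
    rcases hq with h | h
    · exact hδorth q h
    · show K.form δY (Pi.single q 1) = 0
      rw [KMAux.form_expand_left]
      apply Finset.sum_eq_zero
      intro i _
      by_cases hi : δY i = 0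
      · rw [hi, zero_mul]
      · have hiY : i ∈ Y := (hδsupp i).mp hi
        have hAqi : K.A q i = 0 := h.2 i hiY
        have hAiq : K.A i q = 0 := K.isGCM.2.2 q i hAqi
        rw [KMAux.form_single_single K i q hsl, hAiq]
        norm_num
  have hcout : ∀ q, q ∉ S → c q ≤ -1 := by
    intro q hq
    have hqY : q ∉ Y := fun h => hq (Or.inl h)
    have hqP : q ∉ K.Perp Y := fun h => hq (Or.inr h)
    obtain ⟨i0, hi0Y, hA0⟩ : ∃ i ∈ Y, K.A q i ≠ 0 := by
      by_contra hcon
      push_neg at hcon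
      exact hqP ⟨hqY, hcon⟩
    have hAi0q : K.A i0 q ≠ 0 := fun h => hA0 (K.isGCM.2.2 i0 q h)
    have hexpand : c q = ∑ i, δY i * (K.A i q : ℚ) := by
      show K.form δY (Pi.single q 1) = _
      rw [KMAux.form_expand_left]
      exact Finset.sum_congr rfl fun i _ => by rw [KMAux.form_single_single K i q hsl]
    rw [hexpand]
    have hbound : ∀ i ∈ Finset.univ,
        δY i * (K.A i q : ℚ) ≤ (if i = i0 then (-1:ℚ) else 0) := by
      intro i _
      by_cases hi : i = i0
      · subst hi
        rw [if_pos rfl]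
        have hne0 : δY i ≠ 0 := (hδsupp i).mpr hi0Y
        obtain ⟨k, hk⟩ := hδint i
        have h1 : (1:ℚ) ≤ δY i := by
          have hk0 : (0:ℚ) ≤ (k:ℚ) := hk ▸ hδpos i
          have hkne : (k:ℚ) ≠ 0 := hk ▸ hne0
          have : (1:ℤ) ≤ k := by
            have : (0:ℤ) < k := lt_of_le_of_ne (by exact_mod_cast hk0)
              (fun h => hkne (by rw [← h]; norm_num))
            omega
          rw [hk]
          exact_mod_cast this
        have hiq : i ≠ q := fun h => hqY (h ▸ hi0Y)
        have hA : (K.A i q : ℚ) ≤ -1 := by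
          have h1' := K.isGCM.2.1 i q hiq
          have : K.A i q ≤ -1 := by omega
          exact_mod_cast this
        calc δY i * (K.A i q : ℚ) ≤ δY i * (-1) :=
              mul_le_mul_of_nonneg_left hA (hδpos i)
        _ = -δY i := by ring
        _ ≤ -1 := by linarith
      · rw [if_neg hi]
        by_cases hzero : δY i = 0
        · rw [hzero, zero_mul]
        · have hiY : i ∈ Y := (hδsupp i).mp hzero
          have hiq : i ≠ q := fun h => hqY (h ▸ hiY)
          have hA : (K.A i q : ℚ) ≤ 0 := by exact_mod_cast K.isGCM.2.1 i q hiq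
          exact mul_nonpos_of_nonneg_of_nonpos (hδpos i) hA
    calc ∑ i, δY i * (K.A i q : ℚ) ≤ ∑ i, (if i = i0 then (-1:ℚ) else 0) :=
          Finset.sum_le_sum hbound
    _ = -1 := by rw [Finset.sum_ite_eq' Finset.univ i0 (fun _ => (-1:ℚ))]; simp
  have hc0 : ∀ q, c q ≤ 0 := by
    intro q
    by_cases h : q ∈ S
    · rw [hcS q h]
    · linarith [hcout q h]
  have hexp : ∑ q, β q * c q = -1 := by
    simp only [hc]
    rw [← KMAux.form_expand_right]
    exact hform
  have hβpos : ∀ q, 0 ≤ β q := by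
    rcases K.root_sign β (K.real_sub hβ) with h | h
    · exact h
    · exfalso
      have hge : 0 ≤ ∑ q, β q * c q :=
        Finset.sum_nonneg fun q _ => by nlinarith [h q, hc0 q]
      rw [hexp] at hge
      linarith
  set w : ι → ℚ := fun q => if q ∈ S then 0 else β q with hw
  have hwpos : ∀ q, 0 ≤ w q := by
    intro q
    rw [hw]
    by_cases h : q ∈ S
    · simp [h]
    · simp [h, hβpos q]
  have hwle : ∀ q ∈ Finset.univ, β q * c q ≤ -(w q) := by
    intro q _
    by_cases h : q ∈ S
    · rw [hcS q h, mul_zero, hw]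
      simp [h]
    · have : β q * c q ≤ β q * (-1) := mul_le_mul_of_nonneg_left (hcout q h) (hβpos q)
      rw [hw]
      simp only [h, if_false]
      linarith
  have hsumw : ∑ q, w q ≤ 1 := by
    have h1 : ∑ q, β q * c q ≤ ∑ q, -(w q) := Finset.sum_le_sum hwle
    rw [hexp, Finset.sum_neg_distrib] at h1
    linarith
  obtain ⟨p, hwp⟩ : ∃ p, w p ≠ 0 := by
    by_contra hcon
    push_neg at hcon
    have hzero : ∀ q ∈ Finset.univ, β q * c q = 0 := by
      intro q _
      by_cases h : q ∈ S
      · rw [hcS q h, mul_zero]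
      · have : β q = 0 := by
          have := hcon q
          rw [hw] at this
          simpa [h] using this
        rw [this, zero_mul]
    rw [Finset.sum_eq_zero hzero] at hexp
    norm_num at hexp
  have hpS : p ∉ S := by
    intro h
    apply hwp
    rw [hw]
    simp [h]
  have hwβ : w p = β p := by rw [hw]; simp [hpS]
  have hwp1 : (1:ℚ) ≤ w p := by
    obtain ⟨k, hk⟩ := K.root_int β (K.real_sub hβ) p
    rw [hwβ, hk]
    have h0 : (0:ℚ) ≤ (k:ℚ) := hk ▸ hβpos p
    have hne : (k:ℚ) ≠ 0 := by rw [← hk, ← hwβ]; exact hwp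
    have : (1:ℤ) ≤ k := by
      have : (0:ℤ) < k := lt_of_le_of_ne (by exact_mod_cast h0)
        (fun h => hne (by rw [← h]; norm_num))
      omega
    exact_mod_cast this
  have hrest : ∀ q, q ≠ p → w q = 0 := by
    have hsplit : w p + ∑ q ∈ Finset.univ.erase p, w q = ∑ q, w q :=
      Finset.add_sum_erase _ _ (Finset.mem_univ p)
    have hrge : 0 ≤ ∑ q ∈ Finset.univ.erase p, w q :=
      Finset.sum_nonneg fun q _ => hwpos q
    have hrle : ∑ q ∈ Finset.univ.erase p, w q ≤ 0 := by linarith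
    have hzero := (Finset.sum_eq_zero_iff_of_nonneg fun q _ => hwpos q).mp
      (le_antisymm hrle hrge)
    intro q hq
    exact hzero q (Finset.mem_erase.mpr ⟨hq, Finset.mem_univ q⟩)
  have hβp1 : β p = 1 := by
    have hle : w p ≤ ∑ q, w q := Finset.single_le_sum (fun q _ => hwpos q) (Finset.mem_univ p)
    rw [← hwβ]
    linarith
  have hsupp : ∀ q, q ≠ p → q ∉ S → β q = 0 := by
    intro q hq hqS
    have := hrest q hq
    rw [hw] at this
    simpa [hqS] using this
  obtain ⟨n, hn⟩ : ∃ n : ℕ, ∑ q, β q ≤ (n : ℚ) := by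
    choose k hk using K.root_int β (K.real_sub hβ)
    refine ⟨(∑ q, k q).toNat, ?_⟩
    have heq : ∑ q, β q = ((∑ q, k q : ℤ) : ℚ) := by
      push_cast
      exact Finset.sum_congr rfl fun q _ => hk q
    rw [heq]
    exact_mod_cast Int.self_le_toNat _
  obtain ⟨σ, hσmem, hσeq⟩ := KMAux.descent K hsl S p hpS n β hβ hβp1 hsupp hβpos hn
  exact ⟨σ, hσmem, p, hσeq⟩
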